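/- Let ψ : ℝ → ℝ be twice continuously differentiable on a neighborhood of [-1,1], and let l ∈ ℕ with l ≥ 2. Then ∫_{-1}^{0} x^l * (deriv (fun y ↦ (1 - y²) * deriv ψ y)) x dx = -(l*(l+1)) * ∫_{-1}^{0} x^l * ψ x dx + (l*(l-1)) * ∫_{-1}^{0} x^(l-2) * ψ x dx. -/

import Mathlib

open intervalIntegral Set

theorem laplace_beltrami_negative_half_moment
    (ψ : ℝ → ℝ) (U : Set ℝ) (hU : IsOpen U) (hsub : Set.Icc (-1 : ℝ) 1 ⊆ U)
    (hψ : ContDiffOn ℝ 2 ψ U) (l : ℕ) (hl : 2 ≤ l) :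
    ∫ x in (-1 : ℝ)..0, x ^ l * deriv (fun y => (1 - y ^ 2) * deriv ψ y) x =
      -((l : ℝ) * (l + 1)) * (∫ x in (-1 : ℝ)..0, x ^ l * ψ x)
      + (l : ℝ) * ((l : ℝ) - 1) * ∫ x in (-1 : ℝ)..0, x ^ (l - 2) * ψ x := by
  obtain ⟨k, rfl⟩ : ∃ k, l = k + 2 := ⟨l - 2, by omega⟩
  have hUIcc : Set.uIcc (-1:ℝ) 0 ⊆ U := by
    rw [Set.uIcc_of_le (by norm_num)]
    exact fun x hx => hsub ⟨hx.1, le_trans hx.2 (by norm_num)⟩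
  have hψc : ContinuousOn ψ U := hψ.continuousOn
  have hψd : ∀ x ∈ U, HasDerivAt ψ (deriv ψ x) x := fun x hx =>
    ((hψ.differentiableOn two_ne_zero).differentiableAt (hU.mem_nhds hx)).hasDerivAt
  have hψ1 : ContDiffOn ℝ 1 (deriv ψ) U := hψ.deriv_of_isOpen hU le_rfl
  have hψ1d : ∀ x ∈ U, HasDerivAt (deriv ψ) (deriv (deriv ψ) x) x := fun x hx =>
    ((hψ1.differentiableOn one_ne_zero).differentiableAt (hU.mem_nhds hx)).hasDerivAt
  set v : ℝ → ℝ := fun y => (1 - y ^ 2) * deriv ψ y with hv_def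
  set v' : ℝ → ℝ := fun x => -(2*x) * deriv ψ x + (1 - x^2) * deriv (deriv ψ) x with hv'_def
  have hv : ∀ x ∈ U, HasDerivAt v (v' x) x := by
    intro x hx
    have h1 : HasDerivAt (fun y : ℝ => 1 - y ^ 2) (-(2*x)) x := by
      simpa using ((hasDerivAt_pow 2 x).const_sub 1)
    exact h1.mul (hψ1d x hx)
  have hderiv_eq : ∀ x ∈ U, deriv v x = v' x := fun x hx => (hv x hx).deriv
  have hv'cont : ContinuousOn v' U := by
    apply ContinuousOn.add
    · exact (continuousOn_const.mul continuousOn_id).neg.mul hψ1.continuousOn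
    · exact (continuousOn_const.sub (continuousOn_pow 2)).mul
        (hψ1.continuousOn_deriv_of_isOpen hU le_rfl)
  have hvcont : ContinuousOn v U :=
    (continuousOn_const.sub (continuousOn_pow 2)).mul hψ1.continuousOn
  -- First integration by parts
  have ibp1 : ∫ x in (-1:ℝ)..0, x ^ (k+2) * deriv v x
      = - ∫ x in (-1:ℝ)..0, ((k+2:ℝ) * x ^ (k+1)) * v x := by
    rw [integral_mul_deriv_eq_deriv_mul
      (u := fun x => x ^ (k+2)) (u' := fun x => (k+2:ℝ) * x ^ (k+1))
      (v := v) (v' := deriv v)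
      (fun x _ => by simpa using hasDerivAt_pow (k+2) x)
      (fun x hx => ((hv x (hUIcc hx)).differentiableAt).hasDerivAt)
      (((continuousOn_const.mul (continuousOn_pow (k+1))).mono hUIcc).intervalIntegrable)
      ((((hv'cont.congr fun x hx => hderiv_eq x hx).mono hUIcc)).intervalIntegrable)]
    have hb : v (-1) = 0 := by simp [hv_def]
    simp [hb, zero_pow (by omega : k + 2 ≠ 0)]
  -- Rewrite integrand for second IBP
  have hcongr : ∫ x in (-1:ℝ)..0, ((k+2:ℝ) * x ^ (k+1)) * v x
      = ∫ x in (-1:ℝ)..0, ((k+2:ℝ) * (x ^ (k+1) - x ^ (k+3))) * deriv ψ x := by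
    apply integral_congr
    intro x _
    simp only [hv_def]
    ring
  -- Second integration by parts
  have ibp2 : ∫ x in (-1:ℝ)..0, ((k+2:ℝ) * (x ^ (k+1) - x ^ (k+3))) * deriv ψ x
      = - ∫ x in (-1:ℝ)..0,
          ((k+2:ℝ) * ((k+1) * x ^ k - (k+3) * x ^ (k+2))) * ψ x := by
    rw [integral_mul_deriv_eq_deriv_mul
      (u := fun x => (k+2:ℝ) * (x ^ (k+1) - x ^ (k+3)))
      (u' := fun x => (k+2:ℝ) * ((k+1) * x ^ k - (k+3) * x ^ (k+2)))
      (v := ψ) (v' := deriv ψ)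
      (fun x _ => by
        have := ((hasDerivAt_pow (k+1) x).sub (hasDerivAt_pow (k+3) x)).const_mul (k+2:ℝ)
        convert this using 1
        · funext y; simp only [Pi.sub_apply]
        rw [show k + 1 - 1 = k by omega, show k + 3 - 1 = k + 2 by omega]
        push_cast; ring)
      (fun x hx => hψd x (hUIcc hx))
      ((continuous_const.mul ((continuous_const.mul (continuous_pow k)).sub
          (continuous_const.mul (continuous_pow (k+2))))).intervalIntegrable _ _)
      (((hψ1.continuousOn).mono hUIcc).intervalIntegrable)]
    have hb : ((k:ℝ)+2) * ((-1:ℝ) ^ (k+1) - (-1:ℝ) ^ (k+3)) = 0 := by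
      have : ((-1:ℝ)) ^ (k+3) = (-1:ℝ) ^ (k+1) := by
        rw [pow_add, pow_add]; norm_num
      rw [this]; ring
    simp [hb, zero_pow (by omega : k + 1 ≠ 0), zero_pow (by omega : k + 3 ≠ 0)]
  -- integrability of the final integrands
  have hint1 : IntervalIntegrable (fun x => x ^ (k+2) * ψ x) MeasureTheory.volume (-1) 0 :=
    (((continuousOn_pow (k+2)).mul (hψc.mono hUIcc))).intervalIntegrable
  have hint2 : IntervalIntegrable (fun x => x ^ k * ψ x) MeasureTheory.volume (-1) 0 :=
    (((continuousOn_pow k).mul (hψc.mono hUIcc))).intervalIntegrable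
  have hfinal : ∫ x in (-1:ℝ)..0,
      ((k+2:ℝ) * ((k+1) * x ^ k - (k+3) * x ^ (k+2))) * ψ x
      = (k+2:ℝ) * (k+1) * (∫ x in (-1:ℝ)..0, x ^ k * ψ x)
        - (k+2:ℝ) * (k+3) * (∫ x in (-1:ℝ)..0, x ^ (k+2) * ψ x) := by
    have : ∀ x : ℝ, ((k+2:ℝ) * ((k+1) * x ^ k - (k+3) * x ^ (k+2))) * ψ x
        = (k+2:ℝ) * (k+1) * (x ^ k * ψ x) - (k+2:ℝ) * (k+3) * (x ^ (k+2) * ψ x) := by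
      intro x; ring
    simp_rw [this]
    rw [integral_sub ((hint2.const_mul _)) ((hint1.const_mul _)),
      integral_const_mul, integral_const_mul]
  have hk2 : k + 2 - 2 = k := by omega
  rw [hk2, ibp1, hcongr, ibp2, neg_neg, hfinal]
  push_cast
  ring
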